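/- arXiv:1201.5805 — 7 statements merged into one kernel-verified Lean document; each statement's English description precedes it below -/
import Mathlib

section
/- Let K ≥ 3 and define Q_m(K) = min(K−m, m). Suppose D_m (2 ≤ m ≤ K−1) satisfies D_{K−1} = K/(K−1) and D_m = ((m+1)/m) · Q_m(K)/(1 + (Q_m(K)−1)/D_{m+1}) for 2 ≤ m ≤ K−2. Then for 2 ≤ m ≤ ⌈K/2⌉, D_m = ( 1/2 − m(m−1)/(2⌈K/2⌉(⌈K/2⌉−1)) + (m(m−1)/(⌊K/2⌋(⌈K/2⌉−1))) · Σ_{ℓ=⌈K/2⌉+1}^{K} 1/ℓ )^{-1}. -/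
open Finset

lemma Spos (a K : ℕ) (ha : 1 ≤ a) (h : a ≤ K) : 0 < ∑ ℓ ∈ Icc a K, (1 : ℝ) / ℓ := by
  apply Finset.sum_pos
  · intro i hi
    simp only [mem_Icc] at hi
    have : 0 < i := lt_of_lt_of_le ha hi.1
    positivity
  · exact ⟨a, by simp [mem_Icc, h]⟩

lemma Ssplit (m K : ℕ) (h : m + 1 ≤ K) :
    ∑ ℓ ∈ Icc (m + 1) K, (1 : ℝ) / ℓ
      = 1 / (m + 1) + ∑ ℓ ∈ Icc (m + 2) K, (1 : ℝ) / ℓ := by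
  rw [Finset.Icc_eq_cons_Ioc h, Finset.sum_cons, ← Finset.Icc_add_one_left_eq_Ioc]
  norm_num [Nat.succ_eq_add_one, add_assoc]

lemma upper (K : ℕ) (hK : 3 ≤ K) (D : ℕ → ℝ)
    (hinit : D (K - 1) = (K : ℝ) / ((K : ℝ) - 1))
    (hrec : ∀ m, 2 ≤ m → m ≤ K - 2 →
      D m = ((m : ℝ) + 1) / m * (min (K - m) m : ℕ) /
        (1 + ((min (K - m) m : ℕ) - 1) / D (m + 1))) :
    ∀ d m, (K + 1) / 2 ≤ m → m + d = K - 1 →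
      D m = ((m : ℝ) / ((K : ℝ) - m) * ∑ ℓ ∈ Icc (m + 1) K, (1 : ℝ) / ℓ)⁻¹ := by
  intro d
  induction d with
  | zero =>
      intro m hm hmd
      have hmK : m = K - 1 := by omega
      subst hmK
      have h1 : K - 1 + 1 = K := by omega
      have hKR : (1:ℝ) ≤ (K:ℝ) := by exact_mod_cast (by omega : 1 ≤ K)
      have hcast : ((K - 1 : ℕ) : ℝ) = (K : ℝ) - 1 := by
        push_cast [Nat.cast_sub (by omega : 1 ≤ K)]; ring
      rw [hinit, h1, hcast]
      rw [Finset.Icc_self, Finset.sum_singleton]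
      have hK0 : (K : ℝ) ≠ 0 := by positivity
      have hK1 : (K : ℝ) - 1 ≠ 0 := by
        have : (3:ℝ) ≤ K := by exact_mod_cast hK
        linarith
      field_simp
      ring
  | succ d ih =>
      intro m hm hmd
      have hm2 : 2 ≤ m := by omega
      have hmK2 : m ≤ K - 2 := by omega
      have hmin : min (K - m) m = K - m := by omega
      have hKm : m ≤ K := by omega
      have hcKm : ((K - m : ℕ) : ℝ) = (K : ℝ) - m := by
        push_cast [Nat.cast_sub hKm]; ring
      have hIH := ih (m + 1) (by omega) (by omega)
      push_cast at hIH
      have hs : 0 < ∑ ℓ ∈ Icc (m + 2) K, (1 : ℝ) / ℓ :=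
        Spos (m + 2) K (by omega) (by omega)
      set s := ∑ ℓ ∈ Icc (m + 2) K, (1 : ℝ) / ℓ with hsdef
      have hcKm1 : ((K : ℝ)) - ((m:ℝ) + 1) = (K:ℝ) - m - 1 := by ring
      have hKm1pos : (0:ℝ) < (K : ℝ) - m - 1 := by
        have : (m:ℝ) + 2 ≤ K := by exact_mod_cast (by omega : m + 2 ≤ K)
        linarith
      have hmpos : (0:ℝ) < m := by exact_mod_cast (by omega : 0 < m)
      have hrm := hrec m hm2 hmK2
      rw [hmin, hcKm, hIH] at hrm
      rw [hcKm1] at hrm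
      rw [Ssplit m K (by omega), ← hsdef]
      have hne1 : ((m:ℝ) + 1) ≠ 0 := by positivity
      have hne2 : (K:ℝ) - m - 1 ≠ 0 := ne_of_gt hKm1pos
      rw [div_inv_eq_mul] at hrm
      have hsimp : ((K:ℝ) - m - 1) * (((m:ℝ)+1) / ((K:ℝ) - m - 1) * s) = ((m:ℝ)+1) * s := by
        field_simp
      rw [hsimp] at hrm
      have hden : (0:ℝ) < 1 + ((m:ℝ)+1) * s := by positivity
      have hKmpos : (0:ℝ) < (K:ℝ) - m := by linarith
      have h3 : (0:ℝ) < 1/((m:ℝ)+1) + s := by positivity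
      rw [hrm]
      have n1 : (m:ℝ) ≠ 0 := ne_of_gt hmpos
      have n2 : ((K:ℝ) - m) ≠ 0 := ne_of_gt hKmpos
      have n3 : (1 + ((m:ℝ)+1) * s) ≠ 0 := ne_of_gt hden
      have n4 : (1/((m:ℝ)+1) + s) ≠ 0 := ne_of_gt h3
      field_simp


lemma low (K : ℕ) (hK : 3 ≤ K) (D : ℕ → ℝ)
    (hpos : ∀ m, 2 ≤ m → m ≤ K - 1 → 0 < D m)
    (hup : ∀ d m, (K + 1) / 2 ≤ m → m + d = K - 1 →
      D m = ((m : ℝ) / ((K : ℝ) - m) * ∑ ℓ ∈ Icc (m + 1) K, (1 : ℝ) / ℓ)⁻¹)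
    (hrec : ∀ m, 2 ≤ m → m ≤ K - 2 →
      D m = ((m : ℝ) + 1) / m * (min (K - m) m : ℕ) /
        (1 + ((min (K - m) m : ℕ) - 1) / D (m + 1))) :
    ∀ d m, 2 ≤ m → m + d = (K + 1) / 2 →
      D m = (1 / 2
        - (m : ℝ) * ((m : ℝ) - 1) /
            (2 * ((K + 1) / 2 : ℕ) * (((K + 1) / 2 : ℕ) - 1))
        + (m : ℝ) * ((m : ℝ) - 1) / ((K / 2 : ℕ) * (((K + 1) / 2 : ℕ) - 1)) *
            ∑ ℓ ∈ Icc ((K + 1) / 2 + 1) K, (1 : ℝ) / ℓ)⁻¹ := by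
  have hc2 : 2 ≤ (K + 1) / 2 := by omega
  have hcK : (K + 1) / 2 ≤ K - 1 := by omega
  have hf1 : 1 ≤ K / 2 := by omega
  set c := (K + 1) / 2 with hcdef
  set f := K / 2 with hfdef
  have hcR : (2:ℝ) ≤ (c:ℕ) := by exact_mod_cast hc2
  have hfR : (1:ℝ) ≤ (f:ℕ) := by exact_mod_cast hf1
  have hcne : (c:ℝ) ≠ 0 := by linarith
  have hc1ne : (c:ℝ) - 1 ≠ 0 := by linarith
  have hfne : (f:ℝ) ≠ 0 := by linarith
  set S : ℝ := ∑ ℓ ∈ Icc (c + 1) K, (1 : ℝ) / ℓ with hSdef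
  intro d
  induction d with
  | zero =>
      intro m hm2 hmd
      have hmc : m = c := by omega
      subst hmc
      have hKc : ((K - c : ℕ) : ℝ) = (K:ℝ) - c := by
        push_cast [Nat.cast_sub (by omega : c ≤ K)]; ring
      have hfc : (f : ℝ) = (K:ℝ) - c := by
        have hfe : f = K - c := by omega
        rw [hfe, hKc]
      have hu := hup (K - 1 - c) c (by omega) (by omega)
      rw [hu]
      congr 1
      rw [← hSdef, ← hfc]
      field_simp
      ring
  | succ d ih =>
      intro m hm2 hmd
      have hmc : m + 1 ≤ c := by omega
      have hmin : min (K - m) m = m := by omega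
      have hDpos : 0 < D (m + 1) := hpos (m + 1) (by omega) (by omega)
      have hIH := ih (m + 1) (by omega) (by omega)
      set E : ℝ := 1 / 2
        - ((m:ℝ) + 1) * (((m:ℝ) + 1) - 1) / (2 * (c:ℕ) * ((c:ℕ) - 1))
        + ((m:ℝ) + 1) * (((m:ℝ) + 1) - 1) / ((f:ℕ) * ((c:ℕ) - 1)) * S with hEdef
      have hIH' : D (m + 1) = E⁻¹ := by
        rw [hIH]; push_cast; rw [hEdef]
      have hEpos : 0 < E := by
        have h1 : 0 < E⁻¹ := hIH' ▸ hDpos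
        exact inv_pos.mp h1
      have hrm := hrec m hm2 (by omega)
      rw [hmin, hIH'] at hrm
      rw [div_inv_eq_mul] at hrm
      have hmpos : (0:ℝ) < m := by exact_mod_cast (by omega : 0 < m)
      have hm1R : (1:ℝ) ≤ (m:ℝ) - 1 := by
        have : (2:ℝ) ≤ m := by exact_mod_cast hm2
        linarith
      have hden : (0:ℝ) < 1 + ((m:ℝ) - 1) * E := by nlinarith
      have hrm2 : D m = ((m:ℝ) + 1) / (1 + ((m:ℝ) - 1) * E) := by
        rw [hrm]; field_simp
      -- key identity
      have hkey : (1 / 2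
        - (m : ℝ) * ((m : ℝ) - 1) / (2 * (c:ℕ) * ((c:ℕ) - 1))
        + (m : ℝ) * ((m : ℝ) - 1) / ((f:ℕ) * ((c:ℕ) - 1)) * S) * ((m:ℝ) + 1)
          = 1 + ((m:ℝ) - 1) * E := by
        rw [hEdef]
        field_simp
        ring
      have hm1pos : (0:ℝ) < (m:ℝ) + 1 := by positivity
      have hXeq : (1 / 2
        - (m : ℝ) * ((m : ℝ) - 1) / (2 * (c:ℕ) * ((c:ℕ) - 1))
        + (m : ℝ) * ((m : ℝ) - 1) / ((f:ℕ) * ((c:ℕ) - 1)) * S)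
          = (1 + ((m:ℝ) - 1) * E) / ((m:ℝ) + 1) := by
        rw [← hkey]
        field_simp
      have hXpos : 0 < (1 / 2
        - (m : ℝ) * ((m : ℝ) - 1) / (2 * (c:ℕ) * ((c:ℕ) - 1))
        + (m : ℝ) * ((m : ℝ) - 1) / ((f:ℕ) * ((c:ℕ) - 1)) * S) := by
        rw [hXeq]
        exact div_pos hden hm1pos
      rw [hrm2, ← hkey,
        mul_comm (1 / 2 - (m : ℝ) * ((m : ℝ) - 1) / (2 * (c:ℕ) * ((c:ℕ) - 1))
          + (m : ℝ) * ((m : ℝ) - 1) / ((f:ℕ) * ((c:ℕ) - 1)) * S) ((m:ℝ) + 1),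
        div_mul_cancel_left₀ (by positivity : ((m:ℝ) + 1) ≠ 0)]

theorem stmt_1 (K : ℕ) (hK : 3 ≤ K) (D : ℕ → ℝ)
    (hpos : ∀ m, 2 ≤ m → m ≤ K - 1 → 0 < D m)
    (hinit : D (K - 1) = (K : ℝ) / ((K : ℝ) - 1))
    (hrec : ∀ m, 2 ≤ m → m ≤ K - 2 →
      D m = ((m : ℝ) + 1) / m * (min (K - m) m : ℕ) /
        (1 + ((min (K - m) m : ℕ) - 1) / D (m + 1))) :
    ∀ m, 2 ≤ m → m ≤ (K + 1) / 2 →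
      D m = (1 / 2
        - (m : ℝ) * ((m : ℝ) - 1) /
            (2 * ((K + 1) / 2 : ℕ) * (((K + 1) / 2 : ℕ) - 1))
        + (m : ℝ) * ((m : ℝ) - 1) / ((K / 2 : ℕ) * (((K + 1) / 2 : ℕ) - 1)) *
            ∑ ℓ ∈ Icc ((K + 1) / 2 + 1) K, (1 : ℝ) / ℓ)⁻¹ := by
  intro m hm2 hmc
  exact low K hK D hpos (upper K hK D hinit hrec) hrec ((K + 1) / 2 - m) m hm2 (by omega)
end

section
/- For the recursion with Q_m(K) = min(K−m, m): if D_m = ((m+1)/m)·Q_m(K)/(1+(Q_m(K)−1)/D_{m+1}) for ⌈K/2⌉ ≤ m ≤ K−2 with D_{K−1} = K/(K−1), and we set γ_m = (K−m)/(m·D_m), then γ_m = γ_{m+1} + 1/(m+1) for all m in this range, and consequently γ_m = Σ_{ℓ=m+1}^{K} 1/ℓ. -/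
open Finset

theorem stmt_2 (K : ℕ) (hK : 3 ≤ K) (D : ℕ → ℝ)
    (hpos : ∀ m, (K + 1) / 2 ≤ m → m ≤ K - 1 → 0 < D m)
    (hinit : D (K - 1) = (K : ℝ) / ((K : ℝ) - 1))
    (hrec : ∀ m, (K + 1) / 2 ≤ m → m ≤ K - 2 →
      D m = ((m : ℝ) + 1) / m * (min (K - m) m : ℕ) /
        (1 + ((min (K - m) m : ℕ) - 1) / D (m + 1)))
    (γ : ℕ → ℝ)
    (hγ : ∀ m, γ m = ((K : ℝ) - m) / ((m : ℝ) * D m)) :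
    (∀ m, (K + 1) / 2 ≤ m → m ≤ K - 2 → γ m = γ (m + 1) + 1 / ((m : ℝ) + 1)) ∧
    (∀ m, (K + 1) / 2 ≤ m → m ≤ K - 1 →
      γ m = ∑ ℓ ∈ Icc (m + 1) K, (1 : ℝ) / ℓ) := by
  have part1 : ∀ m, (K + 1) / 2 ≤ m → m ≤ K - 2 → γ m = γ (m + 1) + 1 / ((m : ℝ) + 1) := by
    intro m hm1 hm2
    have hm0 : 2 ≤ m := by omega
    have hmK : m + 2 ≤ K := by omega
    have hKm : K - m ≤ m := by omega
    have hmin : min (K - m) m = K - m := min_eq_left hKm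
    have hD1 : 0 < D (m + 1) := hpos (m + 1) (by omega) (by omega)
    have hcast : ((K - m : ℕ) : ℝ) = (K : ℝ) - m := by
      push_cast [Nat.cast_sub (by omega : m ≤ K)]; ring
    have hQ : (2 : ℝ) ≤ (K : ℝ) - m := by
      have : (m : ℝ) + 2 ≤ K := by exact_mod_cast hmK
      linarith
    have hden : 0 < 1 + ((K : ℝ) - m - 1) / D (m + 1) := by
      have : 0 ≤ ((K : ℝ) - m - 1) / D (m + 1) := div_nonneg (by linarith) hD1.le
      linarith
    have hrec' := hrec m hm1 hm2
    rw [hmin, hcast] at hrec'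
    rw [hγ, hγ, hrec']
    have hm0' : (0 : ℝ) < m := by positivity
    push_cast
    field_simp
    ring
  refine ⟨part1, ?_⟩
  have main : ∀ d m, (K + 1) / 2 ≤ m → m ≤ K - 1 → K - 1 - m = d →
      γ m = ∑ ℓ ∈ Icc (m + 1) K, (1 : ℝ) / ℓ := by
    intro d
    induction d with
    | zero =>
      intro m h1 h2 h3
      have hm : m = K - 1 := by omega
      have hcast : ((K - 1 : ℕ) : ℝ) = (K : ℝ) - 1 := by
        push_cast [Nat.cast_sub (by omega : 1 ≤ K)]; ring
      have hKpos : (0 : ℝ) < K := by positivity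
      have hK1 : (0 : ℝ) < (K : ℝ) - 1 := by
        have : (3 : ℝ) ≤ K := by exact_mod_cast hK
        linarith
      have hsum : Icc (m + 1) K = {K} := by
        rw [hm]
        rw [show K - 1 + 1 = K by omega, Finset.Icc_self]
      rw [hγ, hsum, Finset.sum_singleton, hm, hinit, hcast]
      field_simp
      ring
    | succ d ih =>
      intro m h1 h2 h3
      have hm2 : m ≤ K - 2 := by omega
      rw [part1 m h1 hm2, ih (m + 1) (by omega) (by omega) (by omega)]
      have hsplit : ∑ ℓ ∈ Icc (m + 1) K, (1 : ℝ) / ℓ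
          = 1 / ((m : ℝ) + 1) + ∑ ℓ ∈ Icc (m + 2) K, (1 : ℝ) / ℓ := by
        rw [Finset.Icc_eq_cons_Ioc (by omega : m + 1 ≤ K), Finset.sum_cons,
          ← Finset.Icc_add_one_left_eq_Ioc]
        congr 1
        push_cast
        ring
      rw [hsplit]
      ring
  intro m h1 h2
  exact main (K - 1 - m) m h1 h2 rfl
end

section
/- Let K ≥ 2 and consider the recursion D_m = (m+1)(Q_m(K)+1)/(m+1 + m·Q_m(K)/D_{m+1}) for 1 ≤ m ≤ K−1, with D_K = 1, where Q_m(K) = min(K−m, m). Then for ⌈K/2⌉ ≤ m ≤ K, D_m = ( (m/(K−m+1)) · Σ_{ℓ=m}^{K} 1/ℓ )^{-1}. -/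
open Finset

theorem stmt_3 (K : ℕ) (hK : 2 ≤ K) (D : ℕ → ℝ)
    (hpos : ∀ m, 1 ≤ m → m ≤ K → 0 < D m)
    (hinit : D K = 1)
    (hrec : ∀ m, 1 ≤ m → m ≤ K - 1 →
      D m = ((m : ℝ) + 1) * ((min (K - m) m : ℕ) + 1) /
        ((m : ℝ) + 1 + (m : ℝ) * (min (K - m) m : ℕ) / D (m + 1))) :
    ∀ m, (K + 1) / 2 ≤ m → m ≤ K →
      D m = ((m : ℝ) / ((K : ℝ) - m + 1) * ∑ ℓ ∈ Icc m K, (1 : ℝ) / ℓ)⁻¹ := by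
  suffices h : ∀ k m, (K+1)/2 ≤ m → m + k = K →
      D m = ((m : ℝ) / ((K : ℝ) - m + 1) * ∑ ℓ ∈ Icc m K, (1 : ℝ) / ℓ)⁻¹ by
    intro m hm hmK
    exact h (K - m) m hm (by omega)
  intro k
  induction k with
  | zero =>
    intro m hm hmK
    have : m = K := by omega
    subst this
    rw [hinit, Finset.Icc_self, Finset.sum_singleton]
    have hm0 : (m:ℝ) ≠ 0 := by
      have : 1 ≤ m := by omega
      exact_mod_cast Nat.one_le_iff_ne_zero.mp this
    rw [sub_self, zero_add, div_one]
    field_simp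
  | succ k ih =>
    intro m hm hmK
    have hmlt : m < K := by omega
    have h1m : 1 ≤ m := by omega
    have ih' := ih (m+1) (by omega) (by omega)
    have hrec' := hrec m h1m (by omega)
    have hmin : min (K - m) m = K - m := by omega
    rw [hmin] at hrec'
    have hcast : ((K - m : ℕ) : ℝ) = (K:ℝ) - m := by
      have : m ≤ K := le_of_lt hmlt
      push_cast [this]; ring
    rw [hcast] at hrec'
    set a : ℝ := (m : ℝ) with ha
    set c : ℝ := (K : ℝ) with hc
    set S' : ℝ := ∑ ℓ ∈ Icc (m+1) K, (1:ℝ)/ℓ with hS'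
    have hsum : ∑ ℓ ∈ Icc m K, (1:ℝ)/ℓ = 1/a + S' := by
      rw [Finset.Icc_eq_cons_Ioc (le_of_lt hmlt), Finset.sum_cons, hS', ← Finset.Icc_add_one_left_eq_Ioc]
    have ha1 : (1:ℝ) ≤ a := by rw [ha]; exact_mod_cast h1m
    have ha0 : a ≠ 0 := by linarith
    have hca : (0:ℝ) < c - a := by
      have : (m:ℝ) + 1 ≤ K := by exact_mod_cast hmlt
      simp only [ha, hc]; linarith
    have hca0 : c - a ≠ 0 := ne_of_gt hca
    have hS'pos : 0 < S' := by
      rw [hS']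
      apply Finset.sum_pos
      · intro i hi
        have : 0 < i := by
          simp only [Finset.mem_Icc] at hi; omega
        positivity
      · exact ⟨m+1, by simp [Finset.mem_Icc]; omega⟩
    have hS0 : S' ≠ 0 := ne_of_gt hS'pos
    have hDm1 : D (m+1) = (c - a) / ((a + 1) * S') := by
      rw [ih']
      push_cast
      rw [show c - (a + 1) + 1 = c - a by ring]
      rw [mul_inv]
      field_simp
      rw [ha]
    rw [hrec', hDm1, hsum]
    have hden : a + 1 + a * (c - a) / ((c - a) / ((a + 1) * S')) = (a+1) * (1 + a * S') := by
      rw [div_div_eq_mul_div]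
      field_simp
    rw [hden]
    have h1aS : (0:ℝ) < 1 + a * S' := by positivity
    have h1aS0 : (1:ℝ) + a * S' ≠ 0 := ne_of_gt h1aS
    have hca1 : c - a + 1 ≠ 0 := by linarith
    have ha10 : a + 1 ≠ 0 := by linarith
    field_simp
end

section
/- For every integer K ≥ 3, the achievable DoF of the K-user interference channel with full-duplex delayed CSIT, given by D(K) = 4 / ( 3 − 2/(⌈K/2⌉(⌈K/2⌉−1)) + (4/(⌊K/2⌋(⌈K/2⌉−1))) Σ_{ℓ=⌈K/2⌉+1}^{K} 1/ℓ ), satisfies 1 < D(K) < 4/3. -/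
open Finset

theorem stmt_7 (K : ℕ) (hK : 3 ≤ K) :
    1 < 4 / (3 - 2 / ((((K + 1) / 2 : ℕ) : ℝ) * ((((K + 1) / 2 : ℕ) : ℝ) - 1))
        + 4 / (((K / 2 : ℕ) : ℝ) * ((((K + 1) / 2 : ℕ) : ℝ) - 1)) *
            ∑ ℓ ∈ Icc ((K + 1) / 2 + 1) K, (1 : ℝ) / ℓ) ∧
    4 / (3 - 2 / ((((K + 1) / 2 : ℕ) : ℝ) * ((((K + 1) / 2 : ℕ) : ℝ) - 1))
        + 4 / (((K / 2 : ℕ) : ℝ) * ((((K + 1) / 2 : ℕ) : ℝ) - 1)) *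
            ∑ ℓ ∈ Icc ((K + 1) / 2 + 1) K, (1 : ℝ) / ℓ) < 4 / 3 := by
  set m : ℕ := (K + 1) / 2 with hm
  set f : ℕ := K / 2 with hf
  have hm2 : 2 ≤ m := by omega
  have hf1 : 1 ≤ f := by omega
  have hmK : m < K := by omega
  have hmR : (2:ℝ) ≤ (m:ℝ) := by exact_mod_cast hm2
  have hfR : (1:ℝ) ≤ (f:ℝ) := by exact_mod_cast hf1
  have hKR : (0:ℝ) < (K:ℝ) := by positivity
  have hm1 : (0:ℝ) < (m:ℝ) - 1 := by linarith
  have hm0 : (0:ℝ) < (m:ℝ) := by linarith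
  have hf0 : (0:ℝ) < (f:ℝ) := by linarith
  have hcard : (Icc (m+1) K).card = f := by rw [Nat.card_Icc]; omega
  set S : ℝ := ∑ ℓ ∈ Icc (m+1) K, (1 : ℝ) / ℓ with hS
  have hSub : S ≤ (f:ℝ) / ((m:ℝ)+1) := by
    have : S ≤ ∑ ℓ ∈ Icc (m+1) K, (1:ℝ)/((m:ℝ)+1) := by
      apply Finset.sum_le_sum
      intro i hi
      simp only [mem_Icc] at hi
      apply one_div_le_one_div_of_le
      · positivity
      · exact_mod_cast hi.1
    rw [Finset.sum_const, hcard] at this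
    calc S ≤ (f:ℕ) • ((1:ℝ)/((m:ℝ)+1)) := this
      _ = (f:ℝ) / ((m:ℝ)+1) := by rw [nsmul_eq_mul]; ring
  have hSlb : (f:ℝ) / (2*(m:ℝ)) < S := by
    have hterm : ∀ i ∈ Icc (m+1) K, (1:ℝ)/(K:ℝ) ≤ (1:ℝ)/(i:ℝ) := by
      intro i hi
      simp only [mem_Icc] at hi
      apply one_div_le_one_div_of_le
      · have : 0 < i := by omega
        exact_mod_cast this
      · exact_mod_cast hi.2
    rcases Nat.lt_or_ge (2*m) (K+1) with h2m | h2m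
    · -- 2*m = K (K even), use strict term at m+1
      have h2mK : 2*m = K := by omega
      have hmem : m + 1 ∈ Icc (m+1) K := by simp [mem_Icc]; omega
      have hstrict : (1:ℝ)/(K:ℝ) < (1:ℝ)/((m:ℝ)+1) := by
        apply one_div_lt_one_div_of_lt
        · positivity
        · have : m + 1 < K := by omega
          exact_mod_cast this
      have hsum : ∑ _i ∈ Icc (m+1) K, (1:ℝ)/(K:ℝ) < S := by
        apply Finset.sum_lt_sum hterm
        exact ⟨m+1, hmem, by push_cast; exact hstrict⟩
      rw [Finset.sum_const, hcard, nsmul_eq_mul] at hsum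
      have hKeq : (K:ℝ) = 2*(m:ℝ) := by exact_mod_cast h2mK.symm
      calc (f:ℝ) / (2*(m:ℝ)) = (f:ℝ) * ((1:ℝ)/(K:ℝ)) := by rw [hKeq]; ring
        _ < S := hsum
    · -- 2*m = K+1 (K odd)
      have h2mK : 2*m = K+1 := by omega
      have hsum : ∑ _i ∈ Icc (m+1) K, (1:ℝ)/(K:ℝ) ≤ S := Finset.sum_le_sum hterm
      rw [Finset.sum_const, hcard, nsmul_eq_mul] at hsum
      have hKlt : (K:ℝ) < 2*(m:ℝ) := by
        have : K < 2*m := by omega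
        exact_mod_cast this
      have : (f:ℝ) / (2*(m:ℝ)) < (f:ℝ) / (K:ℝ) :=
        div_lt_div_of_pos_left hf0 hKR hKlt
      rw [div_eq_mul_one_div (f:ℝ) (K:ℝ)] at this
      linarith
  -- Denominator bounds
  set D : ℝ := 3 - 2 / ((m:ℝ) * ((m:ℝ) - 1)) + 4 / ((f:ℝ) * ((m:ℝ) - 1)) * S with hD
  have hD3 : 3 < D := by
    have h1 : 4 / ((f:ℝ) * ((m:ℝ) - 1)) * ((f:ℝ) / (2*(m:ℝ))) = 2 / ((m:ℝ) * ((m:ℝ)-1)) := by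
      field_simp
      ring
    have h2 : 4 / ((f:ℝ) * ((m:ℝ) - 1)) * ((f:ℝ) / (2*(m:ℝ))) < 4 / ((f:ℝ) * ((m:ℝ) - 1)) * S := by
      apply mul_lt_mul_of_pos_left hSlb
      positivity
    rw [h1] at h2
    rw [hD]; linarith
  have hD4 : D < 4 := by
    have h1 : 4 / ((f:ℝ) * ((m:ℝ) - 1)) * S ≤ 4 / ((f:ℝ) * ((m:ℝ) - 1)) * ((f:ℝ) / ((m:ℝ)+1)) := by
      apply mul_le_mul_of_nonneg_left hSub
      positivity
    have h2 : 4 / ((f:ℝ) * ((m:ℝ) - 1)) * ((f:ℝ) / ((m:ℝ)+1)) = 4 / (((m:ℝ)-1) * ((m:ℝ)+1)) := by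
      field_simp
    have h3 : 4 / (((m:ℝ)-1) * ((m:ℝ)+1)) < 1 + 2 / ((m:ℝ) * ((m:ℝ)-1)) := by
      rw [← sub_pos]
      have h4 : 1 + 2 / ((m:ℝ) * ((m:ℝ)-1)) - 4 / (((m:ℝ)-1) * ((m:ℝ)+1))
          = (((m:ℝ)-1)^2 * ((m:ℝ)+2)) / ((m:ℝ) * (((m:ℝ)-1) * ((m:ℝ)+1))) := by
        field_simp
        ring
      rw [h4]
      apply div_pos
      · nlinarith
      · positivity
    rw [hD]; linarith
  have hD0 : 0 < D := by linarith
  constructor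
  · rw [lt_div_iff₀ hD0]; linarith
  · rw [div_lt_div_iff₀ hD0 (by norm_num)]; linarith
end

section
/- Let K ≥ 2 and consider the recursion D_m = (m+1)·Q_m(K+1) / (m+1 + m(Q_m(K+1)−1)/D_{m+1}) for 2 ≤ m ≤ K−1, with D_K = 1, where Q_m(n) = min(n−m, m). Then for ⌊K/2⌋ < m ≤ K, D_m = ( (m/(K−m+1)) Σ_{ℓ=m}^{K} 1/ℓ )^{-1}. -/
open Finset

theorem stmt_11 (K : ℕ) (hK : 2 ≤ K) (D : ℕ → ℝ)
    (hpos : ∀ m, 2 ≤ m → m ≤ K → 0 < D m)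
    (hinit : D K = 1)
    (hrec : ∀ m, 2 ≤ m → m ≤ K - 1 →
      D m = ((m : ℝ) + 1) * (min (K + 1 - m) m : ℕ) /
        ((m : ℝ) + 1 + (m : ℝ) * ((min (K + 1 - m) m : ℕ) - 1) / D (m + 1))) :
    ∀ m, K / 2 < m → m ≤ K →
      D m = ((m : ℝ) / ((K : ℝ) - m + 1) * ∑ ℓ ∈ Icc m K, (1 : ℝ) / ℓ)⁻¹ := by
  have key : ∀ d m : ℕ, K - m = d → K / 2 < m → m ≤ K →
      D m = ((m : ℝ) / ((K : ℝ) - m + 1) * ∑ ℓ ∈ Icc m K, (1 : ℝ) / ℓ)⁻¹ := by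
    intro d
    induction d with
    | zero =>
      intro m hd hm hmK
      have hmk : m = K := by omega
      subst hmk
      have hK0 : (m : ℝ) ≠ 0 := Nat.cast_ne_zero.mpr (by omega)
      rw [hinit, Icc_self, sum_singleton]
      field_simp
      ring
    | succ d ih =>
      intro m hd hm hmK
      have hm2 : 2 ≤ m := by omega
      have hmK1 : m ≤ K - 1 := by omega
      have hmin : min (K + 1 - m) m = K + 1 - m := by omega
      have hDm1 : D (m + 1) =
          (((m : ℝ) + 1) / ((K : ℝ) - (m + 1) + 1) * ∑ ℓ ∈ Icc (m+1) K, (1 : ℝ) / ℓ)⁻¹ := by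
        have := ih (m + 1) (by omega) (by omega) (by omega)
        simpa using this
      have hins : Icc m K = insert m (Icc (m+1) K) := by
        ext x; simp only [mem_Icc, mem_insert]; omega
      have hS : 0 < ∑ ℓ ∈ Icc (m+1) K, (1 : ℝ) / ℓ := by
        apply Finset.sum_pos
        · intro i hi
          simp only [mem_Icc] at hi
          have : 0 < (i : ℝ) := by exact_mod_cast (by omega : 0 < i)
          positivity
        · exact ⟨K, by simp [mem_Icc]; omega⟩
      set S := ∑ ℓ ∈ Icc (m+1) K, (1 : ℝ) / ℓ with hSdef
      have hcast : ((min (K + 1 - m) m : ℕ) : ℝ) = (K : ℝ) + 1 - m := by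
        rw [hmin]; push_cast [Nat.cast_sub (by omega : m ≤ K + 1)]; ring
      have hm0 : (0 : ℝ) < (m : ℝ) := by exact_mod_cast (by omega : 0 < m)
      have hKm : (0 : ℝ) < (K : ℝ) - m := by
        have : m < K := by omega
        have := (Nat.cast_lt (α := ℝ)).mpr this
        linarith
      rw [hrec m hm2 hmK1, hDm1, hcast, hins, sum_insert (by simp)]
      have h1 : ((m : ℝ) + 1) / ((K : ℝ) - (m + 1) + 1) * S ≠ 0 := by
        push_cast
        have : (K : ℝ) - ((m : ℝ) + 1) + 1 = (K : ℝ) - m := by ring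
        rw [this]
        positivity
      rw [div_inv_eq_mul]
      have hE : (K : ℝ) - ((m : ℝ) + 1) + 1 = (K : ℝ) - m := by ring
      push_cast [hE]
      have hm' : (m : ℝ) ≠ 0 := ne_of_gt hm0
      have hKm' : (K : ℝ) - m ≠ 0 := ne_of_gt hKm
      have hKm1 : (0 : ℝ) < (K : ℝ) - m + 1 := by linarith
      have hdenL : (m : ℝ) + 1 + (m : ℝ) * ((K : ℝ) + 1 - m - 1) * (((m : ℝ) + 1) / ((K : ℝ) - m) * S) ≠ 0 := by
        have h2 : (K : ℝ) + 1 - m - 1 = (K : ℝ) - m := by ring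
        rw [h2]
        positivity
      have hR : (m : ℝ) / ((K : ℝ) - m + 1) * (1 / m + S) ≠ 0 := by positivity
      rw [show (∑ x ∈ Icc (m+1) K, (1:ℝ)/x) = S from rfl]
      have hden : (m:ℝ) + 1 + (m:ℝ) * ((K:ℝ) + 1 - m - 1) * (((m:ℝ)+1)/((K:ℝ)-m)*S)
          = ((m:ℝ)+1) * (1 + m*S) := by
        field_simp
        ring
      have hrhs : (m:ℝ)/((K:ℝ)-m+1) * (1/m + S) = (1 + m*S)/((K:ℝ)-m+1) := by
        field_simp
      rw [hden, hrhs, inv_div, mul_div_mul_left _ _ (by positivity : (m:ℝ)+1 ≠ 0)]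
      ring_nf
  intro m hm hmK
  exact key (K - m) m rfl hm hmK
end

section
/- Let K ≥ 4 and let D_m satisfy the recursion 1/D_m = 1/m + ((m−1)/(m+1))·(1/D_{m+1}) for 2 ≤ m ≤ ⌊K/2⌋, with boundary value 1/D_{⌊K/2⌋+1} = ((⌊K/2⌋+1)/⌈K/2⌉) Σ_{ℓ=⌊K/2⌋+1}^{K} 1/ℓ. Then for 2 ≤ m ≤ ⌊K/2⌋, 1/D_m = 1/m + m(m−1)·[ 1/m − 1/⌊K/2⌋ − Σ_{ℓ=m+1}^{⌊K/2⌋} 1/ℓ² + (1/(⌊K/2⌋⌈K/2⌉)) Σ_{ℓ=⌊K/2⌋+1}^{K} 1/ℓ ]. -/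
open Finset

theorem stmt_12 (K : ℕ) (hK : 4 ≤ K) (D : ℕ → ℝ)
    (hpos : ∀ m, 2 ≤ m → m ≤ K / 2 + 1 → 0 < D m)
    (hrec : ∀ m, 2 ≤ m → m ≤ K / 2 →
      1 / D m = 1 / (m : ℝ) + ((m : ℝ) - 1) / ((m : ℝ) + 1) * (1 / D (m + 1)))
    (hbd : 1 / D (K / 2 + 1) =
      (((K / 2 : ℕ) : ℝ) + 1) / (((K + 1) / 2 : ℕ) : ℝ) *
        ∑ ℓ ∈ Icc (K / 2 + 1) K, (1 : ℝ) / ℓ) :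
    ∀ m, 2 ≤ m → m ≤ K / 2 →
      1 / D m = 1 / (m : ℝ) + (m : ℝ) * ((m : ℝ) - 1) *
        (1 / (m : ℝ) - 1 / ((K / 2 : ℕ) : ℝ)
          - (∑ ℓ ∈ Icc (m + 1) (K / 2), (1 : ℝ) / (ℓ : ℝ) ^ 2)
          + 1 / (((K / 2 : ℕ) : ℝ) * (((K + 1) / 2 : ℕ) : ℝ)) *
              ∑ ℓ ∈ Icc (K / 2 + 1) K, (1 : ℝ) / ℓ) := by
  have hH2 : 2 ≤ K / 2 := by omega
  have hHne : (((K / 2 : ℕ)) : ℝ) ≠ 0 := Nat.cast_ne_zero.mpr (by omega)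
  have hCne : ((((K + 1) / 2 : ℕ)) : ℝ) ≠ 0 := Nat.cast_ne_zero.mpr (by omega)
  have key : ∀ d : ℕ, ∀ m, 2 ≤ m → m ≤ K / 2 → K / 2 - m = d →
      1 / D m = 1 / (m : ℝ) + (m : ℝ) * ((m : ℝ) - 1) *
        (1 / (m : ℝ) - 1 / ((K / 2 : ℕ) : ℝ)
          - (∑ ℓ ∈ Icc (m + 1) (K / 2), (1 : ℝ) / (ℓ : ℝ) ^ 2)
          + 1 / (((K / 2 : ℕ) : ℝ) * (((K + 1) / 2 : ℕ) : ℝ)) *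
              ∑ ℓ ∈ Icc (K / 2 + 1) K, (1 : ℝ) / ℓ) := by
    intro d
    induction d with
    | zero =>
      intro m hm2 hmH hd
      have hmeq : m = K / 2 := by omega
      subst hmeq
      rw [hrec (K / 2) hm2 hmH, hbd,
        show Icc (K / 2 + 1) (K / 2) = (∅ : Finset ℕ) from Finset.Icc_eq_empty (by omega),
        Finset.sum_empty]
      have hmne : ((K / 2 : ℕ) : ℝ) ≠ 0 := hHne
      have hm1ne : ((K / 2 : ℕ) : ℝ) + 1 ≠ 0 := by positivity
      field_simp
      ring
    | succ d ih =>
      intro m hm2 hmH hd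
      have hm1 : m + 1 ≤ K / 2 := by omega
      have hih := ih (m + 1) (by omega) hm1 (by omega)
      rw [hrec m hm2 hmH, hih]
      have hsplit : ∑ ℓ ∈ Icc (m + 1) (K / 2), (1 : ℝ) / (ℓ : ℝ) ^ 2
          = 1 / ((m : ℝ) + 1) ^ 2 + ∑ ℓ ∈ Icc (m + 1 + 1) (K / 2), (1 : ℝ) / (ℓ : ℝ) ^ 2 := by
        rw [show Icc (m + 1) (K / 2) = insert (m + 1) (Icc (m + 1 + 1) (K / 2)) from by
          ext x; simp only [Finset.mem_Icc, Finset.mem_insert]; omega]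
        rw [Finset.sum_insert (by simp only [Finset.mem_Icc]; omega)]
        congr 1
        push_cast
        ring
      rw [hsplit]
      push_cast
      have hmne : (m : ℝ) ≠ 0 := by exact_mod_cast (by omega : m ≠ 0)
      have hm1ne : (m : ℝ) + 1 ≠ 0 := by positivity
      field_simp
      ring
  intro m hm2 hmH
  exact key (K / 2 - m) m hm2 hmH rfl
end

section
/- For fixed M = 2, the limit as K → ∞ of the achievable DoF D(2,K) = ( 1/(M−1) − 1 + Σ_{ℓ₁=1}^{M−2} 1/ℓ₁² + (1/M²) Σ_{ℓ₂=M−1}^{K} (1/ℓ₂)((M−1)/M)^{min(ℓ₂,K−M+1)−M} )^{-1} evaluated at M = 2, i.e., D(2,K) = ( (1/4) Σ_{ℓ=1}^{K} (1/ℓ)(1/2)^{min(ℓ,K−1)−2} )^{-1}, equals 1/ln 2. -/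
open Finset Filter

lemma aux_sum_tendsto :
    Tendsto (fun n : ℕ => ∑ i ∈ range n, ((1:ℝ)/2) ^ (i+1) / (i+1)) atTop
      (nhds (Real.log 2)) := by
  have h := Real.hasSum_pow_div_log_of_abs_lt_one (x := (1/2:ℝ)) (by rw [abs_of_pos] <;> norm_num)
  have h2 : -Real.log (1 - 1/2) = Real.log 2 := by
    rw [show (1:ℝ) - 1/2 = (2:ℝ)⁻¹ by norm_num, Real.log_inv, neg_neg]
  rw [h2] at h
  exact h.tendsto_sum_nat

lemma aux_g_tendsto :
    Tendsto (fun K : ℕ => (∑ i ∈ range (K-1), ((1:ℝ)/2) ^ (i+1) / (i+1))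
        + (1/(K:ℝ)) * ((1:ℝ)/2) ^ ((K:ℤ) - 1)) atTop (nhds (Real.log 2)) := by
  have h1 : Tendsto (fun K : ℕ => ∑ i ∈ range (K-1), ((1:ℝ)/2) ^ (i+1) / (i+1))
      atTop (nhds (Real.log 2)) :=
    aux_sum_tendsto.comp (tendsto_sub_atTop_nat 1)
  have h2 : Tendsto (fun K : ℕ => (1/(K:ℝ)) * ((1:ℝ)/2) ^ ((K:ℤ) - 1)) atTop (nhds 0) := by
    have hb : Tendsto (fun K : ℕ => ((1:ℝ)/2) ^ ((K:ℤ) - 1)) atTop (nhds 0) := by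
      have := tendsto_pow_atTop_nhds_zero_of_lt_one (by norm_num : (0:ℝ) ≤ 1/2) (by norm_num : (1:ℝ)/2 < 1)
      have h8 : Tendsto (fun K : ℕ => ((1:ℝ)/2) ^ K * ((1:ℝ)/2)^(-1:ℤ)) atTop (nhds (0 * ((1:ℝ)/2)^(-1:ℤ))) :=
        this.mul_const _
      rw [zero_mul] at h8
      refine h8.congr (fun K => ?_)
      rw [← zpow_natCast ((1:ℝ)/2) K, ← zpow_add₀ (by norm_num : (1:ℝ)/2 ≠ 0)]
      ring_nf
    have ha : Tendsto (fun K : ℕ => (1/(K:ℝ))) atTop (nhds 0) := by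
      simpa using tendsto_one_div_atTop_nhds_zero_nat (𝕜 := ℝ)
    simpa using ha.mul hb
  simpa using h1.add h2

theorem stmt_15 :
    Tendsto (fun K : ℕ =>
      ((1 : ℝ) / 4 *
        ∑ ℓ ∈ Icc 1 K, (1 : ℝ) / ℓ * ((1 : ℝ) / 2) ^ ((min ℓ (K - 1) : ℤ) - 2))⁻¹)
      atTop (nhds (1 / Real.log 2)) := by
  have hlog : Real.log 2 ≠ 0 := by positivity
  have heq : (fun K : ℕ =>
      (1 : ℝ) / 4 * ∑ ℓ ∈ Icc 1 K, (1 : ℝ) / ℓ * ((1 : ℝ) / 2) ^ ((min ℓ (K - 1) : ℤ) - 2))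
      =ᶠ[atTop] (fun K : ℕ => (∑ i ∈ range (K-1), ((1:ℝ)/2) ^ (i+1) / (i+1))
        + (1/(K:ℝ)) * ((1:ℝ)/2) ^ ((K:ℤ) - 1)) := by
    filter_upwards [eventually_ge_atTop 2] with K hK
    have hK1 : 1 ≤ K - 1 + 1 := le_add_self
    have hKsub : K - 1 + 1 = K := by omega
    have hsplit : ∑ ℓ ∈ Icc 1 K, (1 : ℝ) / ℓ * ((1 : ℝ) / 2) ^ ((min ℓ (K - 1) : ℤ) - 2)
        = (∑ ℓ ∈ Icc 1 (K-1), (1 : ℝ) / ℓ * ((1 : ℝ) / 2) ^ ((min ℓ (K - 1) : ℤ) - 2))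
          + (1 : ℝ) / K * ((1 : ℝ) / 2) ^ ((min K (K - 1) : ℤ) - 2) := by
      rw [← hKsub, Finset.sum_Icc_succ_top hK1]
      rw [hKsub]
    rw [hsplit]
    have hmin1 : ∀ ℓ ∈ Icc 1 (K-1), (1 : ℝ) / ℓ * ((1 : ℝ) / 2) ^ ((min ℓ (K - 1) : ℤ) - 2)
        = (1 : ℝ) / ℓ * ((1 : ℝ) / 2) ^ ((ℓ : ℤ) - 2) := by
      intro ℓ hℓ
      rw [mem_Icc] at hℓ
      rw [min_eq_left (by omega : (ℓ:ℤ) ≤ (K:ℤ) - 1)]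
    rw [Finset.sum_congr rfl hmin1]
    rw [min_eq_right (by omega : (K:ℤ) - 1 ≤ (K:ℤ))]
    rw [mul_add]
    congr 1
    · rw [mul_sum]
      have hIc : Icc 1 (K-1) = Ico 1 K := by
        rw [← Finset.Ico_add_one_right_eq_Icc]
        exact congrArg (Finset.Ico 1) hKsub
      rw [hIc, Finset.sum_Ico_eq_sum_range]
      apply Finset.sum_congr (by congr 1)
      intro i hi
      have h0 : ((1:ℝ)/2) ^ (((1+i : ℕ) : ℤ) - 2) = ((1:ℝ)/2) ^ ((i:ℤ) + 1) * ((1:ℝ)/2)^(-2:ℤ) := by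
        rw [← zpow_add₀ (by norm_num : (1:ℝ)/2 ≠ 0)]
        congr 1
        push_cast
        ring
      rw [h0]
      have : ((1:ℝ)/2) ^ ((i:ℤ) + 1) = ((1:ℝ)/2) ^ (i + 1) := by
        rw [← zpow_natCast ((1:ℝ)/2) (i+1)]
        push_cast
        ring_nf
      rw [this]
      have hi1 : ((1+i : ℕ) : ℝ) = (i : ℝ) + 1 := by push_cast; ring
      rw [hi1]
      rw [show ((1:ℝ)/2)^(-2:ℤ) = 4 by norm_num]
      ring
    · rw [show (K:ℤ) - 1 - 2 = ((K:ℤ) - 1) + (-2) by ring,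
        zpow_add₀ (by norm_num : (1:ℝ)/2 ≠ 0), show ((1:ℝ)/2)^(-2:ℤ) = 4 by norm_num]
      ring
  have hmain : Tendsto (fun K : ℕ =>
      (1 : ℝ) / 4 * ∑ ℓ ∈ Icc 1 K, (1 : ℝ) / ℓ * ((1 : ℝ) / 2) ^ ((min ℓ (K - 1) : ℤ) - 2))
      atTop (nhds (Real.log 2)) :=
    Tendsto.congr' heq.symm aux_g_tendsto
  have := hmain.inv₀ hlog
  simpa [one_div] using this
end
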